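/- Let h_1,…,h_K ∈ ℂ^N, set H_l = h_l h_l^H, and let Ω(H) = {(tr(Q H_1), …, tr(Q H_K)) : Q Hermitian positive semidefinite, tr(Q) ≤ 1}. Then for every η ∈ ℝ^K, the support function of Ω(H) satisfies s_{Ω(H)}(η) = max(0, λ₁(Σ_{l=1}^K η_l H_l)) ≥ 0, where λ₁ denotes the largest eigenvalue. -/

import Mathlib

open Matrix
open scoped ComplexOrder

/-- The largest eigenvalue of a Hermitian matrix. -/
noncomputable def lam1 {N : ℕ} (M : Matrix (Fin N) (Fin N) ℂ) : ℝ :=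
  if hM : M.IsHermitian then ⨆ i, hM.eigenvalues i else 0

/-- `Ω(H) = {(tr(Q H_1),…,tr(Q H_K)) : Q PSD, tr Q ≤ 1}`. -/
def OmegaH {N K : ℕ} (H : Fin K → Matrix (Fin N) (Fin N) ℂ) : Set (Fin K → ℝ) :=
  {y | ∃ Q : Matrix (Fin N) (Fin N) ℂ, Q.PosSemidef ∧ Q.trace.re ≤ 1 ∧
    y = fun l => ((Q * H l).trace).re}

private lemma psd_diag_re_nonneg {n : ℕ} {A : Matrix (Fin n) (Fin n) ℂ} (hA : A.PosSemidef)
    (i : Fin n) : 0 ≤ (A i i).re := by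
  have hq := hA.dotProduct_mulVec_nonneg (Pi.single i 1)
  rw [Complex.nonneg_iff] at hq
  simpa [dotProduct, Matrix.mulVec, Pi.single_apply, Finset.sum_ite_eq] using hq.1

private lemma key_trace {n : ℕ} {M : Matrix (Fin n) (Fin n) ℂ} (hM : M.IsHermitian)
    (Q : Matrix (Fin n) (Fin n) ℂ) :
    (trace (Q * M)).re
      = ∑ i, hM.eigenvalues i * ((((hM.eigenvectorUnitary : Matrix (Fin n) (Fin n) ℂ))ᴴ * Q *
          ((hM.eigenvectorUnitary : Matrix (Fin n) (Fin n) ℂ))) i i).re := by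
  set U : Matrix (Fin n) (Fin n) ℂ := (hM.eigenvectorUnitary : Matrix (Fin n) (Fin n) ℂ) with hU
  have h1 : trace (Q * M) = trace ((Uᴴ * Q * U) * diagonal (RCLike.ofReal ∘ hM.eigenvalues)) := by
    conv_lhs => rw [hM.spectral_theorem]
    rw [Unitary.conjStarAlgAut_apply, ← hU]
    rw [← Matrix.star_eq_conjTranspose]
    rw [show Q * (U * diagonal (RCLike.ofReal ∘ hM.eigenvalues) * star U)
        = (Q * U * diagonal (RCLike.ofReal ∘ hM.eigenvalues)) * star U by
      simp only [Matrix.mul_assoc]]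
    rw [trace_mul_comm]
    simp only [Matrix.star_eq_conjTranspose, Matrix.mul_assoc]
  rw [h1]
  simp only [Matrix.trace, Matrix.diag, Matrix.mul_diagonal, Complex.re_sum]
  congr 1; ext i
  rw [show ((RCLike.ofReal ∘ hM.eigenvalues) i : ℂ) = Complex.ofReal (hM.eigenvalues i) from rfl,
    mul_comm ((_ : Matrix _ _ ℂ) i i)]
  exact Complex.re_ofReal_mul _ _

/-- For `H_l = h_l h_lᴴ`, the support function of `Ω(H)` in any direction `η`
equals `max(0, λ₁(Σ_l η_l H_l))`, and the maximum is attained. -/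
theorem omega_support_function
    (N K : ℕ)
    (h : Fin K → (Fin N → ℂ))
    (η : Fin K → ℝ) :
    IsGreatest
      ((fun y : Fin K → ℝ => ∑ l, η l * y l) ''
        OmegaH (fun l => Matrix.vecMulVec (h l) (star (h l))))
      (max 0 (lam1 (∑ l, (η l : ℂ) • Matrix.vecMulVec (h l) (star (h l))))) := by
  have hM : (∑ l, (η l : ℂ) • Matrix.vecMulVec (h l) (star (h l))).IsHermitian := by
    unfold Matrix.IsHermitian
    rw [conjTranspose_sum]
    congr 1; ext l i j
    simp [conjTranspose_apply, vecMulVec_apply, mul_comm, Complex.conj_ofReal]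
  set M : Matrix (Fin N) (Fin N) ℂ := ∑ l, (η l : ℂ) • Matrix.vecMulVec (h l) (star (h l))
    with hMdef
  set U : Matrix (Fin N) (Fin N) ℂ := (hM.eigenvectorUnitary : Matrix (Fin N) (Fin N) ℂ)
    with hUdef
  have hUU : Uᴴ * U = 1 := by
    rw [hUdef, ← Matrix.star_eq_conjTranspose]
    exact Unitary.coe_star_mul_self hM.eigenvectorUnitary
  have hUU' : U * Uᴴ = 1 := by
    rw [hUdef, ← Matrix.star_eq_conjTranspose]
    exact Unitary.coe_mul_star_self hM.eigenvectorUnitary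
  have hlam : lam1 M = ⨆ i, hM.eigenvalues i := by rw [lam1, dif_pos hM]
  have hsum : ∀ Q : Matrix (Fin N) (Fin N) ℂ,
      ((Q * M).trace).re
        = ∑ l, η l * ((Q * Matrix.vecMulVec (h l) (star (h l))).trace).re := by
    intro Q
    rw [hMdef, Matrix.mul_sum]
    simp only [Matrix.mul_smul, trace_sum, trace_smul, Complex.re_sum, smul_eq_mul,
      Complex.re_ofReal_mul]
  constructor
  · -- membership
    rcases isEmpty_or_nonempty (Fin N) with hemp | hne
    · -- N = 0
      have hl0 : lam1 M = 0 := by rw [hlam]; exact Real.iSup_of_isEmpty _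
      refine ⟨fun l => (((0 : Matrix (Fin N) (Fin N) ℂ) *
          Matrix.vecMulVec (h l) (star (h l))).trace).re,
        ⟨0, Matrix.PosSemidef.zero, by simp, rfl⟩, ?_⟩
      simp [hl0]
    · obtain ⟨i₀, hi₀⟩ := Finite.exists_max hM.eigenvalues
      have hbdd : BddAbove (Set.range hM.eigenvalues) := Finite.bddAbove_range _
      have hlam' : lam1 M = hM.eigenvalues i₀ := by
        rw [hlam]
        exact le_antisymm (ciSup_le fun i => hi₀ i) (le_ciSup hbdd i₀)
      by_cases h0 : 0 ≤ hM.eigenvalues i₀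
      · -- use Q = U * diagonal (single i₀ 1) * Uᴴ
        set Dg : Matrix (Fin N) (Fin N) ℂ := diagonal (Pi.single i₀ 1) with hDg
        have hDgpsd : Dg.PosSemidef := by
          refine Matrix.PosSemidef.diagonal ?_
          intro i
          simp only [Pi.single_apply]
          split <;> simp
        set Q : Matrix (Fin N) (Fin N) ℂ := U * Dg * Uᴴ with hQdef
        have hQpsd : Q.PosSemidef := hDgpsd.mul_mul_conjTranspose_same U
        have htrDg : Dg.trace = 1 := by
          simp [hDg, Matrix.trace_diagonal, Pi.single_apply, Finset.sum_ite_eq]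
        have htrQ : Q.trace = 1 := by
          rw [hQdef, trace_mul_cycle, hUU, Matrix.one_mul, htrDg]
        have hUQU : Uᴴ * Q * U = Dg := by
          rw [hQdef]
          simp only [← Matrix.mul_assoc]
          rw [hUU, Matrix.one_mul, Matrix.mul_assoc, hUU, Matrix.mul_one]
        refine ⟨fun l => ((Q * Matrix.vecMulVec (h l) (star (h l))).trace).re,
          ⟨Q, hQpsd, by rw [htrQ]; simp, rfl⟩, ?_⟩
        show (∑ l, η l * ((Q * Matrix.vecMulVec (h l) (star (h l))).trace).re) = _
        rw [← hsum Q, key_trace hM Q]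
        have : ∀ i, (((hM.eigenvectorUnitary : Matrix (Fin N) (Fin N) ℂ))ᴴ * Q *
            ((hM.eigenvectorUnitary : Matrix (Fin N) (Fin N) ℂ))) i i = Dg i i := by
          intro i; rw [← hUdef, hUQU]
        simp only [this]
        rw [max_eq_right (hlam' ▸ h0), hlam']
        simp [hDg, Matrix.diagonal_apply_eq, Pi.single_apply, mul_ite, mul_one, mul_zero,
          apply_ite Complex.re, Finset.sum_ite_eq']
      · -- lam1 ≤ 0 : use Q = 0
        have hl0 : max 0 (lam1 M) = 0 :=
          max_eq_left (by rw [hlam']; exact le_of_not_ge h0)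
        refine ⟨fun l => (((0 : Matrix (Fin N) (Fin N) ℂ) *
            Matrix.vecMulVec (h l) (star (h l))).trace).re,
          ⟨0, Matrix.PosSemidef.zero, by simp, rfl⟩, ?_⟩
        simp [hl0]
  · -- upper bound
    rintro x ⟨y, ⟨Q, hQ, htr, rfl⟩, rfl⟩
    simp only
    rw [← hsum Q, key_trace hM Q, ← hUdef]
    set d : Fin N → ℝ := fun i => ((Uᴴ * Q * U) i i).re with hd
    have hd0 : ∀ i, 0 ≤ d i := fun i =>
      psd_diag_re_nonneg (hQ.conjTranspose_mul_mul_same U) i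
    have hdsum : ∑ i, d i ≤ 1 := by
      have h2 : trace (Uᴴ * Q * U) = trace Q := by
        rw [trace_mul_cycle, hUU', Matrix.one_mul]
      have h3 : ∑ i, d i = (trace (Uᴴ * Q * U)).re := by
        simp [hd, Matrix.trace, Matrix.diag, Complex.re_sum]
      rw [h3, h2]; exact htr
    have hle : ∀ i, hM.eigenvalues i ≤ max 0 (lam1 M) := fun i => by
      rw [hlam]
      exact le_max_of_le_right (le_ciSup (Finite.bddAbove_range _) i)
    calc ∑ i, hM.eigenvalues i * d i
        ≤ ∑ i, max 0 (lam1 M) * d i :=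
          Finset.sum_le_sum fun i _ => mul_le_mul_of_nonneg_right (hle i) (hd0 i)
      _ = max 0 (lam1 M) * ∑ i, d i := by rw [Finset.mul_sum]
      _ ≤ max 0 (lam1 M) * 1 := mul_le_mul_of_nonneg_left hdsum (le_max_left _ _)
      _ = max 0 (lam1 M) := mul_one _
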